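/- If M ⊆ ℤ^m is a seminormal affine monoid, then gp(M) ∩ relint(cone(M)) ⊆ M. -/

import Mathlib

noncomputable section

/-- The canonical embedding `ℤ^m → ℝ^m`. -/
def toR {m : ℕ} (x : Fin m → ℤ) : Fin m → ℝ := fun i => (x i : ℝ)

/-- The subgroup of `ℤ^m` generated by a submonoid `M`. -/
def gp {m : ℕ} (M : AddSubmonoid (Fin m → ℤ)) : AddSubgroup (Fin m → ℤ) :=
  AddSubgroup.closure (M : Set (Fin m → ℤ))

/-- The convex cone in `ℝ^m` generated by `M`: all nonnegative real combinations
of elements of `M`. -/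
def coneM {m : ℕ} (M : AddSubmonoid (Fin m → ℤ)) : Set (Fin m → ℝ) :=
  {x | ∃ (n : ℕ) (c : Fin n → ℝ) (v : Fin n → (Fin m → ℤ)),
    (∀ i, 0 ≤ c i) ∧ (∀ i, v i ∈ M) ∧ x = ∑ i, c i • toR (v i)}

/-- Faces of `coneM M`: the cone itself, or an intersection with a supporting
hyperplane given by a linear form nonnegative on the cone. -/
def IsFace {m : ℕ} (M : AddSubmonoid (Fin m → ℤ)) (F : Set (Fin m → ℝ)) : Prop :=
  F = coneM M ∨ ∃ α : (Fin m → ℝ) →ₗ[ℝ] ℝ,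
    (∀ x ∈ coneM M, 0 ≤ α x) ∧ F = {x ∈ coneM M | α x = 0}

/-- A facet: a maximal proper face. -/
def IsFacet {m : ℕ} (M : AddSubmonoid (Fin m → ℤ)) (F : Set (Fin m → ℝ)) : Prop :=
  IsFace M F ∧ F ≠ coneM M ∧ ∀ G, IsFace M G → F ⊆ G → G = F ∨ G = coneM M

/-- The subgroup `gp(M ∩ F)` of `ℤ^m` generated by the elements of `M` lying
in the face `F`. -/
def gpF {m : ℕ} (M : AddSubmonoid (Fin m → ℤ)) (F : Set (Fin m → ℝ)) :
    AddSubgroup (Fin m → ℤ) :=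
  AddSubgroup.closure {a : Fin m → ℤ | a ∈ M ∧ toR a ∈ F}

/-- `M` is seminormal: `z ∈ gp(M)`, `2z ∈ M`, `3z ∈ M` imply `z ∈ M`. -/
def Seminormal {m : ℕ} (M : AddSubmonoid (Fin m → ℤ)) : Prop :=
  ∀ z ∈ gp M, 2 • z ∈ M → 3 • z ∈ M → z ∈ M

/-- `M` is normal: `z ∈ gp(M)`, `kz ∈ M` for some `k ≥ 1` imply `z ∈ M`. -/
def IsNormal {m : ℕ} (M : AddSubmonoid (Fin m → ℤ)) : Prop :=
  ∀ z ∈ gp M, (∃ k : ℕ, 0 < k ∧ k • z ∈ M) → z ∈ M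

/-- `M` is positive: `0` is the only invertible element. -/
def Positive {m : ℕ} (M : AddSubmonoid (Fin m → ℤ)) : Prop :=
  ∀ a ∈ M, -a ∈ M → a = 0

/-- The localization monoid `M_F` of `M` at a face `F`:
elements `a ∈ gp(M)` with `a + b ∈ M` for some `b ∈ M ∩ F`. -/
def locM {m : ℕ} (M : AddSubmonoid (Fin m → ℤ)) (F : Set (Fin m → ℝ)) :
    Set (Fin m → ℤ) :=
  {a | a ∈ gp M ∧ ∃ b, b ∈ M ∧ toR b ∈ F ∧ a + b ∈ M}

lemma toR_inj {m : ℕ} {x y : Fin m → ℤ} (h : toR x = toR y) : x = y := by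
  funext j
  have : (x j : ℝ) = (y j : ℝ) := congrFun h j
  exact_mod_cast this

lemma toR_add {m : ℕ} (x y : Fin m → ℤ) : toR (x + y) = toR x + toR y := by
  funext j; simp [toR]

lemma toR_sub {m : ℕ} (x y : Fin m → ℤ) : toR (x - y) = toR x - toR y := by
  funext j; simp [toR]

lemma toR_zero {m : ℕ} : toR (0 : Fin m → ℤ) = 0 := by funext j; simp [toR]

lemma toR_nsmul {m : ℕ} (k : ℕ) (x : Fin m → ℤ) : toR (k • x) = (k : ℝ) • toR x := by
  funext j; simp [toR]

lemma toR_zsmul {m : ℕ} (k : ℤ) (x : Fin m → ℤ) : toR (k • x) = (k : ℝ) • toR x := by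
  funext j; simp [toR]

def toRHom {m : ℕ} : (Fin m → ℤ) →+ (Fin m → ℝ) where
  toFun := toR
  map_zero' := toR_zero
  map_add' := toR_add

lemma toR_sum {m n : ℕ} (f : Fin n → (Fin m → ℤ)) :
    toR (∑ i, f i) = ∑ i, toR (f i) := by
  exact map_sum (toRHom) f Finset.univ

/-- elements of gp M are differences of elements of M -/
lemma gp_split {m : ℕ} (M : AddSubmonoid (Fin m → ℤ)) {z : Fin m → ℤ} (hz : z ∈ gp M) :
    ∃ p q, p ∈ M ∧ q ∈ M ∧ z = p - q := by
  induction hz using AddSubgroup.closure_induction with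
  | mem x hx => exact ⟨x, 0, hx, M.zero_mem, by simp⟩
  | zero => exact ⟨0, 0, M.zero_mem, M.zero_mem, by simp⟩
  | add x y _ _ hx hy =>
      obtain ⟨p, q, hp, hq, rfl⟩ := hx
      obtain ⟨p', q', hp', hq', rfl⟩ := hy
      exact ⟨p + p', q + q', M.add_mem hp hp', M.add_mem hq hq', by abel⟩
  | neg x _ hx =>
      obtain ⟨p, q, hp, hq, rfl⟩ := hx
      exact ⟨q, p, hq, hp, by abel⟩

/-- every element of M is an ℕ-combination of the generators -/
lemma mem_M_combo {m n : ℕ} {M : AddSubmonoid (Fin m → ℤ)} {v : Fin n → (Fin m → ℤ)}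
    (hcl : AddSubmonoid.closure (Set.range v) = M) {x : Fin m → ℤ} (hx : x ∈ M) :
    ∃ f : Fin n → ℕ, x = ∑ i, f i • v i := by
  rw [← hcl] at hx
  induction hx using AddSubmonoid.closure_induction with
  | mem x hx =>
      obtain ⟨i0, rfl⟩ := hx
      refine ⟨fun i => if i = i0 then 1 else 0, ?_⟩
      simp [Finset.sum_ite_eq']
  | zero => exact ⟨0, by simp⟩
  | add x y _ _ hx hy =>
      obtain ⟨f, rfl⟩ := hx
      obtain ⟨g, rfl⟩ := hy
      refine ⟨f + g, ?_⟩
      rw [← Finset.sum_add_distrib]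
      exact Finset.sum_congr rfl fun i _ => by rw [Pi.add_apply]; exact (add_nsmul (v i) (f i) (g i)).symm

/-- members of coneM are nonneg combinations of the generators -/
lemma coneM_combo {m n : ℕ} {M : AddSubmonoid (Fin m → ℤ)} {v : Fin n → (Fin m → ℤ)}
    (hcl : AddSubmonoid.closure (Set.range v) = M) {x : Fin m → ℝ} (hx : x ∈ coneM M) :
    ∃ c : Fin n → ℝ, (∀ i, 0 ≤ c i) ∧ x = ∑ i, c i • toR (v i) := by
  obtain ⟨N, cN, w, hcN, hw, rfl⟩ := hx
  choose f hf using fun j => mem_M_combo hcl (hw j)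
  refine ⟨fun i => ∑ j, cN j * (f j i : ℝ), fun i => Finset.sum_nonneg fun j _ =>
    mul_nonneg (hcN j) (by positivity), ?_⟩
  have : ∀ j, cN j • toR (w j) = ∑ i, (cN j * (f j i : ℝ)) • toR (v i) := by
    intro j
    rw [hf j, toR_sum fun i => f j i • v i, Finset.smul_sum]
    exact Finset.sum_congr rfl fun i _ => by rw [toR_nsmul, smul_smul]
  simp only [this]
  rw [Finset.sum_comm]
  exact Finset.sum_congr rfl fun i _ => by rw [Finset.sum_smul]

lemma floor_add_floor_le (x y : ℝ) : ⌊x⌋ + ⌊y⌋ ≤ ⌊x + y⌋ := by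
  apply Int.le_floor.mpr
  push_cast
  exact add_le_add (Int.floor_le x) (Int.floor_le y)

lemma pos_combo_nat {m n : ℕ} {z : Fin m → ℤ} {v : Fin n → (Fin m → ℤ)}
    {c : Fin n → ℝ} (hc : ∀ i, 0 < c i) (hzc : toR z = ∑ i, c i • toR (v i)) :
    ∃ (D : ℕ) (a : Fin n → ℕ), 0 < D ∧ (∀ i, 1 ≤ a i) ∧ D • z = ∑ i, a i • v i := by
  classical
  -- choose K with K * c i ≥ 2
  obtain ⟨K, hK1, hK⟩ : ∃ K : ℕ, 1 ≤ K ∧ ∀ i, 2 ≤ (K : ℝ) * c i := by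
    choose Ki hKi using fun i => exists_nat_gt (2 / c i)
    refine ⟨Finset.univ.sup Ki + 1, Nat.le_add_left 1 _, fun i => ?_⟩
    have h1 : (Ki i : ℝ) ≤ ((Finset.univ.sup Ki + 1 : ℕ) : ℝ) := by
      exact_mod_cast Nat.le_succ_of_le (Finset.le_sup (Finset.mem_univ i))
    have h2 := (div_lt_iff₀ (hc i)).mp (hKi i)
    nlinarith [hc i, h2]
  -- coordinates of z over ℝ
  have hzj : ∀ j, (z j : ℝ) = ∑ i, c i * ((v i j : ℤ) : ℝ) := by
    intro j
    have := congrFun hzc j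
    simpa [toR, Finset.sum_apply] using this
  -- the integer remainders
  set b : ℕ → Fin n → ℤ := fun N i => ⌊((N * K : ℕ) : ℝ) * c i⌋ with hbdef
  set r : ℕ → Fin m → ℤ := fun N => ((N * K : ℕ) : ℤ) • z - ∑ i, b N i • v i with hrdef
  set B : Fin m → ℤ := fun j => ∑ i, |v i j| with hBdef
  have hfrac0 : ∀ N i, 0 ≤ ((N * K : ℕ) : ℝ) * c i - (b N i : ℝ) := fun N i =>
    sub_nonneg.mpr (Int.floor_le _)
  have hfrac1 : ∀ N i, ((N * K : ℕ) : ℝ) * c i - (b N i : ℝ) ≤ 1 := fun N i =>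
    le_of_lt (sub_lt_iff_lt_add'.mpr (Int.lt_floor_add_one _))
  have hrb : ∀ N j, (r N j : ℝ) = ∑ i, (((N * K : ℕ) : ℝ) * c i - (b N i : ℝ)) * (v i j : ℝ) := by
    intro N j
    have : r N j = ((N * K : ℕ) : ℤ) * z j - ∑ i, b N i * v i j := by
      simp [hrdef, Finset.sum_apply]
    rw [this]
    push_cast
    rw [hzj j, Finset.mul_sum, ← Finset.sum_sub_distrib]
    refine Finset.sum_congr rfl fun i _ => by ring
  have hbound : ∀ N j, |r N j| ≤ B j := by
    intro N j
    have hreal : |(r N j : ℝ)| ≤ (B j : ℝ) := by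
      rw [hrb N j]
      calc |∑ i, (((N * K : ℕ) : ℝ) * c i - (b N i : ℝ)) * (v i j : ℝ)|
          ≤ ∑ i, |(((N * K : ℕ) : ℝ) * c i - (b N i : ℝ)) * (v i j : ℝ)| :=
            Finset.abs_sum_le_sum_abs _ _
        _ ≤ ∑ i, |(v i j : ℝ)| := by
            refine Finset.sum_le_sum fun i _ => ?_
            rw [abs_mul]
            have h1 : |((N * K : ℕ) : ℝ) * c i - (b N i : ℝ)| ≤ 1 :=
              abs_le.mpr ⟨by linarith [hfrac0 N i], hfrac1 N i⟩
            nlinarith [abs_nonneg ((v i j : ℝ))]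
        _ = (B j : ℝ) := by rw [hBdef]; push_cast; rfl
    exact_mod_cast hreal
  -- pigeonhole
  have hTfin : (Set.pi Set.univ fun j => Set.Icc (-(B j)) (B j)).Finite :=
    Set.Finite.pi fun j => Set.finite_Icc _ _
  have hmaps : Set.MapsTo r Set.univ (Set.pi Set.univ fun j => Set.Icc (-(B j)) (B j)) := by
    intro N _
    intro j _
    exact abs_le.mp (hbound N j)
  obtain ⟨N1, -, N2, -, hne, heqr⟩ :=
    Set.infinite_univ.exists_ne_map_eq_of_mapsTo hmaps hTfin
  -- main construction, for ordered pair
  have main : ∀ N1 N2 : ℕ, N1 < N2 → r N1 = r N2 →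
      ∃ (D : ℕ) (a : Fin n → ℕ), 0 < D ∧ (∀ i, 1 ≤ a i) ∧ D • z = ∑ i, a i • v i := by
    clear hne heqr N1 N2
    intro N1 N2 hlt heq
    have hbmono : ∀ i, b N1 i + 2 ≤ b N2 i := by
      intro i
      have hx : ((N1 * K : ℕ) : ℝ) * c i + (K : ℝ) * c i ≤ ((N2 * K : ℕ) : ℝ) * c i := by
        rw [← add_mul]
        apply mul_le_mul_of_nonneg_right _ (le_of_lt (hc i))
        push_cast
        have h5 : (N1 + 1) * K ≤ N2 * K := Nat.mul_le_mul_right K hlt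
        have h6 : (((N1 + 1) * K : ℕ) : ℝ) ≤ ((N2 * K : ℕ) : ℝ) := Nat.cast_le.mpr h5
        push_cast at h6
        linarith
      calc b N1 i + 2 ≤ ⌊((N1 * K : ℕ) : ℝ) * c i⌋ + ⌊(K : ℝ) * c i⌋ := by
            have h4 : (2 : ℤ) ≤ ⌊(K : ℝ) * c i⌋ := Int.le_floor.mpr (by exact_mod_cast hK i)
            have hb1 : b N1 i = ⌊((N1 * K : ℕ) : ℝ) * c i⌋ := rfl
            omega
        _ ≤ ⌊((N1 * K : ℕ) : ℝ) * c i + (K : ℝ) * c i⌋ := floor_add_floor_le _ _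
        _ ≤ b N2 i := Int.floor_le_floor hx
    -- difference equation over ℤ
    have h2 : ((N2 * K : ℕ) : ℤ) • z - ((N1 * K : ℕ) : ℤ) • z
        = (∑ i, b N2 i • v i) - ∑ i, b N1 i • v i := by
      have h3 : ((N1 * K : ℕ) : ℤ) • z - ((N2 * K : ℕ) : ℤ) • z
          = (∑ i, b N1 i • v i) - ∑ i, b N2 i • v i := by
        rw [sub_eq_sub_iff_sub_eq_sub]
        exact heq
      rw [← neg_sub, h3, neg_sub]
    refine ⟨N2 * K - N1 * K, fun i => (b N2 i - b N1 i).toNat, ?_, ?_, ?_⟩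
    · have : N1 * K < N2 * K := by
        apply Nat.mul_lt_mul_of_lt_of_le hlt (le_refl K) (by omega)
      omega
    · intro i
      have := hbmono i
      dsimp only
      omega
    · have hIntEq : (((N2 * K - N1 * K : ℕ)) : ℤ) • z = ∑ i, (b N2 i - b N1 i) • v i := by
        have hle : N1 * K ≤ N2 * K := Nat.mul_le_mul_right K (le_of_lt hlt)
        rw [Nat.cast_sub hle, sub_smul, h2]
        rw [← Finset.sum_sub_distrib]
        exact Finset.sum_congr rfl fun i _ => (sub_smul _ _ _).symm
      have hcast : ∀ i, (((b N2 i - b N1 i).toNat : ℤ)) = b N2 i - b N1 i := by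
        intro i
        exact Int.toNat_of_nonneg (by have := hbmono i; omega)
      rw [← natCast_zsmul]
      rw [hIntEq]
      refine Finset.sum_congr rfl fun i _ => ?_
      dsimp only
      rw [← natCast_zsmul, hcast i]
  rcases lt_or_gt_of_ne hne with h | h
  · exact main N1 N2 h heqr
  · exact main N2 N1 h heqr.symm

lemma descent {m : ℕ} {M : AddSubmonoid (Fin m → ℤ)} (hsn : Seminormal M)
    {z : Fin m → ℤ} (hz : z ∈ gp M) :
    ∀ K : ℕ, (∀ k : ℕ, 0 < k → K ≤ k → k • z ∈ M) → z ∈ M := by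
  intro K
  induction K with
  | zero => intro h; simpa using h 1 one_pos (Nat.zero_le _)
  | succ K ih =>
      intro h
      apply ih
      intro k hk hKk
      rcases Nat.lt_or_ge k (K + 1) with hlt | hge
      · -- k = K, k ≥ K so k = K; show K • z ∈ M via seminormality (k > 0)
        have hkK : k = K := by omega
        subst hkK
        apply hsn (k • z) (AddSubgroup.nsmul_mem _ hz k)
        · rw [smul_smul]
          exact h (2 * k) (by omega) (by omega)
        · rw [smul_smul]
          exact h (3 * k) (by omega) (by omega)
      · exact h k hk hge

lemma large_multiples {m n : ℕ} {M : AddSubmonoid (Fin m → ℤ)} {v : Fin n → (Fin m → ℤ)}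
    (hv : ∀ i, v i ∈ M) (hcl : AddSubmonoid.closure (Set.range v) = M)
    {z : Fin m → ℤ} (hz : z ∈ gp M) (D : ℕ) (hD : 0 < D) (a : Fin n → ℕ)
    (ha : ∀ i, 1 ≤ a i) (hDz : D • z = ∑ i, a i • v i) :
    ∃ K : ℕ, ∀ k : ℕ, K ≤ k → k • z ∈ M := by
  obtain ⟨p, q, hp, hq, hzpq⟩ := gp_split M hz
  obtain ⟨nq, hnq⟩ := mem_M_combo hcl hq
  set NB := Finset.univ.sup nq with hNB
  refine ⟨D * (D * NB + D), fun k hk => ?_⟩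
  set u := k / D with hu
  set r := k % D with hr
  have hkuD : D * u + r = k := Nat.div_add_mod k D
  have hrD : r < D := Nat.mod_lt _ hD
  have huge : D * NB + D ≤ u := by
    rw [hu, Nat.le_div_iff_mul_le hD]
    calc (D * NB + D) * D ≤ D * (D * NB + D) := by ring_nf; omega
    _ ≤ k := hk
  have hle : ∀ i, r * nq i ≤ u * a i := by
    intro i
    calc r * nq i ≤ D * NB :=
          Nat.mul_le_mul (le_of_lt hrD) (Finset.le_sup (Finset.mem_univ i))
    _ ≤ u := by omega
    _ = u * 1 := (mul_one u).symm
    _ ≤ u * a i := Nat.mul_le_mul_left u (ha i)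
  -- key identity
  have key : k • z + ∑ i, (r * nq i) • v i = (∑ i, (u * a i) • v i) + r • p := by
    have h1 : ∑ i, (r * nq i) • v i = r • q := by
      rw [hnq, Finset.smul_sum]
      exact Finset.sum_congr rfl fun i _ => (smul_smul r (nq i) (v i)).symm
    have h2 : ∑ i, (u * a i) • v i = u • (D • z) := by
      rw [hDz, Finset.smul_sum]
      exact Finset.sum_congr rfl fun i _ => (smul_smul u (a i) (v i)).symm
    rw [h1, h2, smul_smul]
    have hkz : k • z = (u * D) • z + r • z := by
      rw [← add_smul]; congr 1; rw [Nat.mul_comm]; omega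
    rw [hkz, hzpq, smul_sub, smul_sub]
    abel
  have hfin : k • z = (∑ i, (u * a i - r * nq i) • v i) + r • p := by
    have hsum : (∑ i, (u * a i - r * nq i) • v i) + ∑ i, (r * nq i) • v i
        = ∑ i, (u * a i) • v i := by
      rw [← Finset.sum_add_distrib]
      refine Finset.sum_congr rfl fun i _ => ?_
      rw [← add_nsmul, Nat.sub_add_cancel (hle i)]
    have h3 : k • z + ∑ i, (r * nq i) • v i
        = ((∑ i, (u * a i - r * nq i) • v i) + r • p) + ∑ i, (r * nq i) • v i := by
      rw [key, ← hsum]; abel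
    exact add_right_cancel h3
  rw [hfin]
  exact M.add_mem (AddSubmonoid.sum_mem _ fun i _ => AddSubmonoid.nsmul_mem _ (hv i) _)
    (AddSubmonoid.nsmul_mem _ hp r)

lemma relint_pos {m n : ℕ} {M : AddSubmonoid (Fin m → ℤ)} {v : Fin n → (Fin m → ℤ)}
    (hv : ∀ i, v i ∈ M) (hcl : AddSubmonoid.closure (Set.range v) = M)
    {z : Fin m → ℤ} (hzr : toR z ∈ intrinsicInterior ℝ (coneM M)) :
    ∃ c : Fin n → ℝ, (∀ i, 0 < c i) ∧ toR z = ∑ i, c i • toR (v i) := by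
  classical
  set w : Fin m → ℤ := ∑ i, v i with hw
  have hwcone : toR w ∈ coneM M := by
    refine ⟨n, fun _ => 1, v, fun i => zero_le_one, hv, ?_⟩
    rw [hw, toR_sum]
    exact Finset.sum_congr rfl fun i _ => (one_smul ℝ _).symm
  have h0cone : (0 : Fin m → ℝ) ∈ coneM M :=
    ⟨0, 0, fun _ => 0, fun i => le_refl _, fun i => M.zero_mem, by simp⟩
  obtain ⟨y, hyU, hycoe⟩ := hzr
  have hzspan : toR z ∈ affineSpan ℝ (coneM M) := hycoe ▸ y.2
  have hdir : toR w ∈ (affineSpan ℝ (coneM M)).direction := by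
    have := AffineSubspace.vsub_mem_direction (subset_affineSpan ℝ _ hwcone)
      (subset_affineSpan ℝ _ h0cone)
    simpa using this
  have hmem : ∀ δ : ℝ, toR z - δ • toR w ∈ affineSpan ℝ (coneM M) := by
    intro δ
    have := AffineSubspace.vadd_mem_of_mem_direction
      (Submodule.smul_mem _ (-δ) hdir) hzspan
    have heq : (-δ) • toR w +ᵥ toR z = toR z - δ • toR w := by
      simp [vadd_eq_add, neg_smul, sub_eq_add_neg, add_comm]
    rwa [heq] at this
  set γ : ℝ → affineSpan ℝ (coneM M) := fun δ => ⟨toR z - δ • toR w, hmem δ⟩ with hγ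
  have hcont : Continuous γ := by
    apply Continuous.subtype_mk
    exact continuous_const.sub (continuous_id.smul continuous_const)
  have hγ0 : γ 0 = y := by
    apply Subtype.ext
    simp [hγ, ← hycoe]
  have hopen : IsOpen (γ ⁻¹' interior ((↑) ⁻¹' coneM M)) :=
    isOpen_interior.preimage hcont
  have h0mem : (0 : ℝ) ∈ γ ⁻¹' interior ((↑) ⁻¹' coneM M) := by
    simp only [Set.mem_preimage, hγ0]; exact hyU
  obtain ⟨ε, hε, hball⟩ := Metric.isOpen_iff.mp hopen 0 h0mem
  set δ := ε / 2 with hδ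
  have hδpos : 0 < δ := by positivity
  have hδball : δ ∈ Metric.ball (0 : ℝ) ε := by
    simp only [Metric.mem_ball, Real.dist_eq, sub_zero]
    rw [abs_of_pos hδpos]
    linarith
  have hδcone : toR z - δ • toR w ∈ coneM M := by
    have h1 : γ δ ∈ Subtype.val ⁻¹' coneM M := interior_subset (hball hδball)
    exact h1
  obtain ⟨d, hd, hdeq⟩ := coneM_combo hcl hδcone
  refine ⟨fun i => d i + δ, fun i => by have := hd i; dsimp only; linarith, ?_⟩
  have hwsum : toR w = ∑ i, toR (v i) := by rw [hw, toR_sum]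
  have : toR z = (∑ i, d i • toR (v i)) + δ • ∑ i, toR (v i) := by
    rw [← hwsum, ← hdeq]; abel
  rw [this, Finset.smul_sum, ← Finset.sum_add_distrib]
  exact Finset.sum_congr rfl fun i _ => by rw [add_smul]


/-- If `M` is a seminormal affine monoid, then
`gp(M) ∩ relint(cone(M)) ⊆ M`. -/
theorem gp_inter_relint_subset {m : ℕ} (M : AddSubmonoid (Fin m → ℤ)) (hFG : M.FG)
    (hsn : Seminormal M) :
    ∀ z ∈ gp M, toR z ∈ intrinsicInterior ℝ (coneM M) → z ∈ M := by
  obtain ⟨S, hS⟩ := hFG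
  set n := S.card with hn
  set v : Fin n → (Fin m → ℤ) := fun i => (S.equivFin.symm i : Fin m → ℤ) with hvdef
  have hrange : Set.range v = (S : Set (Fin m → ℤ)) := by
    ext x
    constructor
    · rintro ⟨i, rfl⟩
      exact (S.equivFin.symm i).2
    · intro hx
      exact ⟨S.equivFin ⟨x, hx⟩, by simp [hvdef]⟩
  have hcl : AddSubmonoid.closure (Set.range v) = M := by rw [hrange]; exact hS
  have hv : ∀ i, v i ∈ M := by
    intro i
    rw [← hcl]
    exact AddSubmonoid.subset_closure ⟨i, rfl⟩
  intro z hz hrelint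
  obtain ⟨c, hc, hzc⟩ := relint_pos hv hcl hrelint
  obtain ⟨D, a, hD, ha, hDz⟩ := pos_combo_nat hc hzc
  obtain ⟨Kb, hKb⟩ := large_multiples hv hcl hz D hD a ha hDz
  exact descent hsn hz Kb (fun k _ hKk => hKb k hKk)
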